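/- Let c > 1, 0 < ε < 1, and q ∈ (1, c). Let B be a standard Brownian motion, Ψ(x) := e^{x²/2} − 1, μ(x) := √(c x), and for T > 0 let ξ_T := f_ε(T) ∫₀ᵀ ∫₀ᵀ Ψ(|B_t − B_s| / μ(|t − s|)) ds dt, where f_ε(T) := (1/T + 1)^{2(1−ε)} if T < 1, f_ε(1) := 1, and f_ε(T) := (T − 1)^{−2(1+ε)} if T > 1. Then, for every integer T ≥ 2, E[ξ_T^q] ≤ (T^{2q} / (T − 1)^{(2+ε)q}) · √(c/(c − q)) and E[ξ_{1/T}^q] ≤ ((T + 1)^{(2−ε)q} / T^{2q}) · √(c/(c − q)). -/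

import Mathlib

open MeasureTheory ProbabilityTheory ENNReal
open scoped NNReal

/-- `B` is a standard one-dimensional Brownian motion on `(Ω, P)`. -/
def IsBrownianMotion {Ω : Type*} [MeasurableSpace Ω] (P : Measure Ω) (B : ℝ → Ω → ℝ) : Prop :=
  (∀ t : ℝ, Measurable (B t)) ∧
  (∀ ω, B 0 ω = 0) ∧
  (∀ ω, Continuous fun t => B t ω) ∧
  (∀ s t : ℝ, 0 ≤ s → s ≤ t →
    P.map (fun ω => B t ω - B s ω) = gaussianReal 0 (Real.toNNReal (t - s))) ∧
  (∀ (n : ℕ) (u : Fin (n + 1) → ℝ), Monotone u → 0 ≤ u 0 →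
    iIndepFun (m := fun _ => Real.measurableSpace)
      (fun i : Fin n => fun ω => B (u i.succ) ω - B (u i.castSucc) ω) P)

/-- `Ψ(x) := e^{x²/2} − 1`. -/
noncomputable def Psi (x : ℝ) : ℝ := Real.exp (x ^ 2 / 2) - 1

/-- `μ(x) := √(c x)`. -/
noncomputable def mu (c x : ℝ) : ℝ := Real.sqrt (c * x)

/-- `f_ε(T) = (1/T + 1)^{2(1−ε)}` for `T < 1`, `f_ε(1) = 1`,
and `f_ε(T) = (T−1)^{−2(1+ε)}` for `T > 1`. -/
noncomputable def feps (ε T : ℝ) : ℝ :=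
  if T < 1 then (1 / T + 1) ^ (2 * (1 - ε))
  else if T = 1 then 1
  else (T - 1) ^ (-(2 * (1 + ε)))

/-- `ξ_T(ω) := f_ε(T) ∫₀ᵀ∫₀ᵀ Ψ(|B_t(ω) − B_s(ω)| / μ(|t−s|)) ds dt`,
as a lower integral with values in `[0, ∞]`. -/
noncomputable def xiT {Ω : Type*} (B : ℝ → Ω → ℝ) (c ε T : ℝ) (ω : Ω) : ℝ≥0∞ :=
  ENNReal.ofReal (feps ε T) *
    ∫⁻ t in Set.Icc (0:ℝ) T, ∫⁻ s in Set.Icc (0:ℝ) T,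
      ENNReal.ofReal (Psi (|B t ω - B s ω| / mu c |t - s|))

lemma jensen_aux {α : Type*} [MeasurableSpace α] (μ : Measure α) {f : α → ℝ≥0∞}
    (hf : AEMeasurable f μ) {q : ℝ} (hq : 1 < q) :
    (∫⁻ a, f a ∂μ) ^ q ≤ (μ Set.univ) ^ (q - 1) * ∫⁻ a, f a ^ q ∂μ := by
  have hq0 : (0:ℝ) < q := lt_trans zero_lt_one hq
  have hpq : q.HolderConjugate (Real.conjExponent q) := Real.HolderConjugate.conjExponent hq
  have h := ENNReal.lintegral_mul_le_Lp_mul_Lq μ hpq hf (aemeasurable_const (b := (1:ℝ≥0∞)))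
  simp only [Pi.mul_apply, Pi.one_apply, mul_one, ENNReal.one_rpow, lintegral_const,
    one_mul] at h
  calc (∫⁻ a, f a ∂μ) ^ q
      ≤ ((∫⁻ a, f a ^ q ∂μ) ^ (1/q) * (μ Set.univ) ^ (1 / Real.conjExponent q)) ^ q :=
        ENNReal.rpow_le_rpow h hq0.le
    _ = (μ Set.univ) ^ (q - 1) * ∫⁻ a, f a ^ q ∂μ := by
        rw [ENNReal.mul_rpow_of_nonneg _ _ hq0.le, ← ENNReal.rpow_mul, ← ENNReal.rpow_mul,
          one_div_mul_cancel (ne_of_gt hq0), ENNReal.rpow_one, mul_comm]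
        congr 2
        rw [Real.conjExponent]
        field_simp

open Real in
lemma gauss_exp_moment {v : ℝ≥0} (hv : 0 < (v:ℝ)) {θ : ℝ} (hθ0 : 0 ≤ θ)
    (hθ : 2 * θ * v < 1) :
    ∫⁻ x, ENNReal.ofReal (Real.exp (θ * x ^ 2)) ∂(gaussianReal 0 v)
      = ENNReal.ofReal (Real.sqrt (1 / (1 - 2 * θ * v))) := by
  have hv0 : v ≠ 0 := by exact_mod_cast hv.ne'
  set b : ℝ := 1 / (2 * v) - θ with hb
  have hbpos : 0 < b := by
    rw [hb, sub_pos, lt_div_iff₀ (by positivity)]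
    linarith [hθ]
  have hint : Integrable (fun x : ℝ => (Real.sqrt (2 * π * v))⁻¹ * Real.exp (-b * x ^ 2)) :=
    (integrable_exp_neg_mul_sq hbpos).const_mul _
  have key : ∀ x : ℝ, gaussianPDFReal 0 v x * Real.exp (θ * x ^ 2)
      = (Real.sqrt (2 * π * v))⁻¹ * Real.exp (-b * x ^ 2) := by
    intro x
    rw [gaussianPDFReal]
    rw [mul_assoc, ← Real.exp_add]
    congr 1
    congr 1
    rw [hb]
    ring
  rw [gaussianReal_of_var_ne_zero _ hv0,
    lintegral_withDensity_eq_lintegral_mul _ (measurable_gaussianPDF _ _)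
      (by fun_prop : Measurable fun x : ℝ => ENNReal.ofReal (Real.exp (θ * x ^ 2)))]
  have : ∀ x : ℝ, (gaussianPDF 0 v * fun x => ENNReal.ofReal (Real.exp (θ * x ^ 2))) x
      = ENNReal.ofReal ((Real.sqrt (2 * π * v))⁻¹ * Real.exp (-b * x ^ 2)) := by
    intro x
    simp only [Pi.mul_apply, gaussianPDF]
    rw [← ENNReal.ofReal_mul (gaussianPDFReal_nonneg _ _ _), key]
  simp_rw [this]
  rw [← ofReal_integral_eq_lintegral_ofReal hint
    (ae_of_all _ fun x => by positivity)]
  congr 1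
  rw [integral_const_mul, integral_gaussian]
  rw [← Real.sqrt_inv, ← Real.sqrt_mul (by positivity)]
  congr 1
  have h1 : 1 - 2 * θ * (v:ℝ) = 2 * v * b := by
    rw [hb]; field_simp
  rw [h1]
  field_simp [Real.pi_ne_zero, hv.ne', hbpos.ne']

lemma continuous_Psi : Continuous Psi := by unfold Psi; fun_prop

lemma pair_bound_le {Ω : Type*} [MeasurableSpace Ω] (P : Measure Ω) [IsProbabilityMeasure P]
    (B : ℝ → Ω → ℝ) (hB : IsBrownianMotion P B)
    {c q : ℝ} (hc : 1 < c) (hq₁ : 1 < q) (hqc : q < c)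
    {s t : ℝ} (hs : 0 ≤ s) (hst : s ≤ t) :
    ∫⁻ ω, (ENNReal.ofReal (Psi (|B t ω - B s ω| / mu c |t - s|))) ^ q ∂P
      ≤ ENNReal.ofReal (Real.sqrt (c / (c - q))) := by
  have hq0 : (0:ℝ) < q := lt_trans zero_lt_one hq₁
  have hc0 : (0:ℝ) < c := lt_trans zero_lt_one hc
  have hX : Measurable fun ω => B t ω - B s ω := (hB.1 t).sub (hB.1 s)
  have hF : Measurable fun x : ℝ => (ENNReal.ofReal (Psi (|x| / mu c |t - s|))) ^ q := by
    apply Measurable.pow_const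
    exact (continuous_Psi.measurable.comp (measurable_abs.div_const _)).ennreal_ofReal
  have hmap : ∫⁻ ω, (ENNReal.ofReal (Psi (|B t ω - B s ω| / mu c |t - s|))) ^ q ∂P
      = ∫⁻ x, (ENNReal.ofReal (Psi (|x| / mu c |t - s|))) ^ q
          ∂(gaussianReal 0 (Real.toNNReal (t - s))) := by
    rw [← hB.2.2.2.1 s t hs hst, lintegral_map hF hX]
  rw [hmap]
  rcases eq_or_lt_of_le hst with rfl | hlt
  · have h0 : (s - s).toNNReal = 0 := by simp
    rw [h0, gaussianReal_zero_var, lintegral_dirac' _ hF]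
    simp [Psi, ENNReal.zero_rpow_of_pos hq0]
  · have hts : (0:ℝ) < t - s := sub_pos.mpr hlt
    set θ : ℝ := q / (2 * c * (t - s)) with hθdef
    have hθ0 : 0 ≤ θ := by positivity
    have hcoe : ((Real.toNNReal (t - s)) : ℝ) = t - s := Real.coe_toNNReal _ hts.le
    have h2θ : 2 * θ * (t - s) = q / c := by rw [hθdef]; field_simp
    have hptw : ∀ x : ℝ, (ENNReal.ofReal (Psi (|x| / mu c |t - s|))) ^ q
        ≤ ENNReal.ofReal (Real.exp (θ * x ^ 2)) := by
      intro x
      have habs : |t - s| = t - s := abs_of_pos hts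
      have hval : Psi (|x| / mu c |t - s|) = Real.exp (x ^ 2 / (2 * c * (t - s))) - 1 := by
        rw [Psi, habs, mu, div_pow, sq_abs, Real.sq_sqrt (by positivity)]
        congr 2
        rw [div_div]
        congr 1
        ring
      rw [hval]
      have h1 : Real.exp (x ^ 2 / (2 * c * (t - s))) - 1
          ≤ Real.exp (x ^ 2 / (2 * c * (t - s))) := by linarith
      calc (ENNReal.ofReal (Real.exp (x ^ 2 / (2 * c * (t - s))) - 1)) ^ q
          ≤ (ENNReal.ofReal (Real.exp (x ^ 2 / (2 * c * (t - s))))) ^ q :=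
            ENNReal.rpow_le_rpow (ENNReal.ofReal_le_ofReal h1) hq0.le
        _ = ENNReal.ofReal (Real.exp (x ^ 2 / (2 * c * (t - s))) ^ q) := by
            rw [← ENNReal.ofReal_rpow_of_nonneg (Real.exp_pos _).le hq0.le]
        _ = ENNReal.ofReal (Real.exp (θ * x ^ 2)) := by
            rw [Real.rpow_def_of_pos (Real.exp_pos _), Real.log_exp]
            congr 1
            rw [hθdef]
            ring
    calc ∫⁻ x, (ENNReal.ofReal (Psi (|x| / mu c |t - s|))) ^ q
            ∂(gaussianReal 0 (Real.toNNReal (t - s)))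
        ≤ ∫⁻ x, ENNReal.ofReal (Real.exp (θ * x ^ 2))
            ∂(gaussianReal 0 (Real.toNNReal (t - s))) := lintegral_mono hptw
      _ = ENNReal.ofReal (Real.sqrt (1 / (1 - 2 * θ * (Real.toNNReal (t - s) : ℝ)))) := by
          apply gauss_exp_moment (by rw [hcoe]; exact hts) hθ0
          rw [hcoe, h2θ]
          rw [div_lt_one hc0]; exact hqc
      _ = ENNReal.ofReal (Real.sqrt (c / (c - q))) := by
          rw [hcoe, h2θ]
          congr 1
          rw [one_sub_div hc0.ne', one_div_div]

lemma main_bound {Ω : Type*} [MeasurableSpace Ω] (P : Measure Ω) [IsProbabilityMeasure P]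
    (B : ℝ → Ω → ℝ) (hB : IsBrownianMotion P B)
    {c ε q : ℝ} (hc : 1 < c) (hq₁ : 1 < q) (hqc : q < c)
    {T' : ℝ} (hT' : 0 < T') (hf : 0 ≤ feps ε T') :
    ∫⁻ ω, (xiT B c ε T' ω) ^ q ∂P
      ≤ ENNReal.ofReal ((feps ε T' * T' ^ 2) ^ q * Real.sqrt (c / (c - q))) := by
  have hq0 : (0:ℝ) < q := lt_trans zero_lt_one hq₁
  set K := ENNReal.ofReal (Real.sqrt (c / (c - q))) with hK
  set a := ENNReal.ofReal (feps ε T') with ha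
  set ν := volume.restrict (Set.Icc (0:ℝ) T') with hν
  set g : Ω → ℝ × ℝ → ℝ≥0∞ :=
    fun ω p => ENNReal.ofReal (Psi (|B p.1 ω - B p.2 ω| / mu c |p.1 - p.2|)) with hg
  -- measurability
  have hBu : Measurable (Function.uncurry B) :=
    measurable_uncurry_of_continuous_of_measurable hB.2.2.1 hB.1
  have h1 : Measurable fun z : Ω × ℝ × ℝ => B z.2.1 z.1 :=
    hBu.comp (measurable_snd.fst.prodMk measurable_fst)
  have h2 : Measurable fun z : Ω × ℝ × ℝ => B z.2.2 z.1 :=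
    hBu.comp (measurable_snd.snd.prodMk measurable_fst)
  have hden : Measurable fun z : Ω × ℝ × ℝ => mu c |z.2.1 - z.2.2| := by
    apply Real.continuous_sqrt.measurable.comp
    exact ((measurable_snd.fst.sub measurable_snd.snd).abs.const_mul c)
  have hG : Measurable fun z : Ω × ℝ × ℝ => g z.1 z.2 :=
    (continuous_Psi.measurable.comp ((h1.sub h2).abs.div hden)).ennreal_ofReal
  have hGq : Measurable fun z : Ω × ℝ × ℝ => (g z.1 z.2) ^ q := hG.pow_const q
  -- mass of the product measure
  have hM : (ν.prod ν) Set.univ = ENNReal.ofReal T' * ENNReal.ofReal T' := by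
    rw [← Set.univ_prod_univ, Measure.prod_prod, hν, Measure.restrict_apply_univ,
      Real.volume_Icc, sub_zero]
  set M := (ν.prod ν) Set.univ with hMdef
  have hMne : M ≠ ∞ := by rw [hM]; exact ENNReal.mul_ne_top ofReal_ne_top ofReal_ne_top
  have hM0 : M ≠ 0 := by
    rw [hM]
    simp [ENNReal.ofReal_eq_zero, not_le, hT']
  -- rewrite xiT as product integral
  have hx : ∀ ω, xiT B c ε T' ω = a * ∫⁻ p, g ω p ∂(ν.prod ν) := by
    intro ω
    rw [xiT]
    congr 1
    exact lintegral_lintegral ((hG.comp measurable_prodMk_left).aemeasurable)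
  -- the per-pair bound
  have hpair : ∀ t s : ℝ, 0 ≤ s → 0 ≤ t →
      ∫⁻ ω, (ENNReal.ofReal (Psi (|B t ω - B s ω| / mu c |t - s|))) ^ q ∂P ≤ K := by
    intro t s hs ht
    rcases le_total s t with h | h
    · exact pair_bound_le P B hB hc hq₁ hqc hs h
    · have heq : ∀ ω, |B t ω - B s ω| / mu c |t - s| = |B s ω - B t ω| / mu c |s - t| := by
        intro ω; rw [abs_sub_comm (B t ω), abs_sub_comm t]
      simp_rw [heq]
      exact pair_bound_le P B hB hc hq₁ hqc ht h
  have hCne : a ^ q * M ^ (q - 1) ≠ ∞ :=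
    ENNReal.mul_ne_top (ENNReal.rpow_ne_top_of_nonneg hq0.le ofReal_ne_top)
      (ENNReal.rpow_ne_top_of_nonneg (by linarith) hMne)
  calc ∫⁻ ω, (xiT B c ε T' ω) ^ q ∂P
      ≤ ∫⁻ ω, (a ^ q * M ^ (q - 1)) * ∫⁻ p, (g ω p) ^ q ∂(ν.prod ν) ∂P := by
        apply lintegral_mono
        intro ω
        dsimp only
        rw [hx ω, ENNReal.mul_rpow_of_nonneg _ _ hq0.le, mul_assoc]
        exact mul_le_mul_right
          (jensen_aux _ ((hG.comp measurable_prodMk_left).aemeasurable) hq₁) _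
    _ = (a ^ q * M ^ (q - 1)) * ∫⁻ ω, ∫⁻ p, (g ω p) ^ q ∂(ν.prod ν) ∂P :=
        lintegral_const_mul' _ _ hCne
    _ = (a ^ q * M ^ (q - 1)) * ∫⁻ p, ∫⁻ ω, (g ω p) ^ q ∂P ∂(ν.prod ν) := by
        rw [lintegral_lintegral_swap hGq.aemeasurable]
    _ ≤ (a ^ q * M ^ (q - 1)) * (K * M) := by
        apply mul_le_mul_right
        have hprodr : ν.prod ν
            = (volume.prod volume).restrict (Set.Icc (0:ℝ) T' ×ˢ Set.Icc (0:ℝ) T') := by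
          rw [hν, Measure.prod_restrict]
        rw [hprodr]
        calc ∫⁻ p in Set.Icc (0:ℝ) T' ×ˢ Set.Icc (0:ℝ) T', ∫⁻ ω, (g ω p) ^ q ∂P
                ∂(volume.prod volume)
            ≤ ∫⁻ _ in Set.Icc (0:ℝ) T' ×ˢ Set.Icc (0:ℝ) T', K ∂(volume.prod volume) := by
              apply setLIntegral_mono' (measurableSet_Icc.prod measurableSet_Icc)
              intro p hp
              exact hpair p.1 p.2 hp.2.1 hp.1.1
          _ = K * M := by
              rw [setLIntegral_const, hMdef, hprodr, Measure.restrict_apply_univ]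
    _ = ENNReal.ofReal ((feps ε T' * T' ^ 2) ^ q * Real.sqrt (c / (c - q))) := by
        have hMq : M ^ (q - 1) * M = M ^ q := by
          nth_rewrite 2 [← ENNReal.rpow_one M]
          rw [← ENNReal.rpow_add _ _ hM0 hMne]
          norm_num
        have hre : (a ^ q * M ^ (q - 1)) * (K * M) = (a ^ q * M ^ q) * K := by
          rw [← hMq]; ring
        have haM : a * M = ENNReal.ofReal (feps ε T' * T' ^ 2) := by
          rw [ha, hM, ← ENNReal.ofReal_mul hT'.le, ← ENNReal.ofReal_mul hf]
          congr 1
          ring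
        rw [hre, ← ENNReal.mul_rpow_of_nonneg _ _ hq0.le, haM,
          ENNReal.ofReal_rpow_of_nonneg (mul_nonneg hf (sq_nonneg _)) hq0.le,
          hK, ← ENNReal.ofReal_mul (by positivity)]

/-- **Moment bounds for `ξ_T` and `ξ_{1/T}`.** Let `c > 1`, `0 < ε < 1` and
`q ∈ (1, c)`. Then for every integer `T ≥ 2`,
`E[ξ_T^q] ≤ (T^{2q}/(T−1)^{(2+ε)q}) √(c/(c−q))` and
`E[ξ_{1/T}^q] ≤ ((T+1)^{(2−ε)q}/T^{2q}) √(c/(c−q))`. -/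
theorem xiT_moment_bounds
    {Ω : Type*} [MeasurableSpace Ω] (P : Measure Ω) [IsProbabilityMeasure P]
    (B : ℝ → Ω → ℝ) (hB : IsBrownianMotion P B)
    (c ε : ℝ) (hc : 1 < c) (hε₀ : 0 < ε) (hε₁ : ε < 1)
    (q : ℝ) (hq₁ : 1 < q) (hqc : q < c)
    (T : ℕ) (hT : 2 ≤ T) :
    (∫⁻ ω, (xiT B c ε (T : ℝ) ω) ^ q ∂P ≤
      ENNReal.ofReal ((T : ℝ) ^ (2 * q) / ((T : ℝ) - 1) ^ ((2 + ε) * q) *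
        Real.sqrt (c / (c - q)))) ∧
    (∫⁻ ω, (xiT B c ε (1 / (T : ℝ)) ω) ^ q ∂P ≤
      ENNReal.ofReal (((T : ℝ) + 1) ^ ((2 - ε) * q) / (T : ℝ) ^ (2 * q) *
        Real.sqrt (c / (c - q)))) := by
  have hT2 : (2:ℝ) ≤ (T:ℝ) := by exact_mod_cast hT
  have hT0 : (0:ℝ) < T := by linarith
  have hq0 : (0:ℝ) < q := by linarith
  have hsq : (0:ℝ) ≤ Real.sqrt (c / (c - q)) := Real.sqrt_nonneg _
  have hA1 : (1:ℝ) ≤ (T:ℝ) - 1 := by linarith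
  have hA0 : (0:ℝ) ≤ (T:ℝ) - 1 := by linarith
  constructor
  · have hfeval : feps ε (T:ℝ) = ((T:ℝ) - 1) ^ (-(2 * (1 + ε))) := by
      rw [feps, if_neg (by push_neg; linarith), if_neg (by intro h; rw [h] at hT2; linarith)]
    have hf : 0 ≤ feps ε (T:ℝ) := by rw [hfeval]; positivity
    refine le_trans (main_bound P B hB hc hq₁ hqc hT0 hf) ?_
    apply ENNReal.ofReal_le_ofReal
    apply mul_le_mul_of_nonneg_right _ hsq
    rw [hfeval]
    rw [Real.mul_rpow (Real.rpow_nonneg hA0 _) (by positivity)]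
    rw [← Real.rpow_natCast (T:ℝ) 2, ← Real.rpow_mul hT0.le, ← Real.rpow_mul hA0]
    rw [div_eq_mul_inv, ← Real.rpow_neg hA0, mul_comm]
    push_cast
    apply mul_le_mul_of_nonneg_left _ (Real.rpow_nonneg hT0.le _)
    apply Real.rpow_le_rpow_of_exponent_le hA1
    nlinarith [mul_pos hε₀ hq0]
  · have h1T : (0:ℝ) < 1 / T := by positivity
    have hfeval : feps ε (1 / (T:ℝ)) = ((T:ℝ) + 1) ^ (2 * (1 - ε)) := by
      rw [feps, if_pos (by rw [div_lt_one hT0]; linarith), one_div_one_div]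
    have hf : 0 ≤ feps ε (1 / (T:ℝ)) := by rw [hfeval]; positivity
    refine le_trans (main_bound P B hB hc hq₁ hqc h1T hf) ?_
    apply ENNReal.ofReal_le_ofReal
    apply mul_le_mul_of_nonneg_right _ hsq
    rw [hfeval]
    have hB1 : (1:ℝ) ≤ (T:ℝ) + 1 := by linarith
    have hB0 : (0:ℝ) ≤ (T:ℝ) + 1 := by linarith
    rw [Real.mul_rpow (Real.rpow_nonneg hB0 _) (by positivity)]
    rw [← Real.rpow_natCast (1 / (T:ℝ)) 2, ← Real.rpow_mul h1T.le, ← Real.rpow_mul hB0]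
    rw [one_div, Real.inv_rpow hT0.le, div_eq_mul_inv]
    push_cast
    apply mul_le_mul_of_nonneg_right _ (by positivity)
    apply Real.rpow_le_rpow_of_exponent_le hB1
    nlinarith [mul_pos hε₀ hq0]
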